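/- Let n ≥ 1 and T ≥ 1 be natural numbers and let X₁, X₂, … be i.i.d. random variables uniformly distributed on Fin n. If t ≥ 4T·⌈2n·log(2n)⌉, then P[for every i ∈ Fin n, |{s ≤ t : X_s = i}| ≥ T] ≥ 1 − exp(−T/4). (Step 1 of the proof of Lemma 20: dividing the t draws into 4T blocks of length ⌈2n·log(2n)⌉, each block covers all of Fin n with probability at least 1/2, and a Chernoff bound for the binomial distribution B(4T, 1/2) gives P[B(4T,1/2) ≥ T] ≥ 1 − exp(−T/4).) -/

import Mathlib

open Finset MeasureTheory ProbabilityTheory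

private lemma choose_le_two_pow_aux (a b : ℕ) : a.choose b ≤ 2 ^ a := by
  rcases le_or_gt b a with h | h
  · calc a.choose b ≤ ∑ m ∈ Finset.range (a + 1), a.choose m :=
          Finset.single_le_sum (fun i _ => Nat.zero_le _) (Finset.mem_range.mpr (by omega))
      _ = 2 ^ a := Nat.sum_range_choose a
  · simp [Nat.choose_eq_zero_of_lt h]

/-- **Step 1 of the proof of Lemma 20.**  Let `X₁, X₂, …` be i.i.d. uniform draws from
the `n`-element set `Fin n` and let `T ≥ 1`.  If `t ≥ 4T⌈2n log(2n)⌉`, then with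
probability at least `1 − exp(−T/4)` every value `i ∈ Fin n` occurs at least `T` times
among the first `t` draws. -/
theorem stmt_14 (n : ℕ) (hn : 1 ≤ n)
    {Ω : Type*} [MeasurableSpace Ω] (P : Measure Ω) [IsProbabilityMeasure P]
    (X : ℕ → Ω → Fin n)
    (hX_meas : ∀ s, Measurable (X s))
    (hindep : iIndepFun X P)
    (hunif : ∀ (s : ℕ) (i : Fin n), P {ω | X s ω = i} = (n : ENNReal)⁻¹)
    (T : ℕ) (hT : 1 ≤ T)
    (t : ℕ) (ht : 4 * T * ⌈2 * (n : ℝ) * Real.log (2 * n)⌉₊ ≤ t) :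
    ENNReal.ofReal (1 - Real.exp (-(T : ℝ) / 4)) ≤
      P {ω | ∀ i : Fin n, T ≤ ((Finset.Icc 1 t).filter (fun s => X s ω = i)).card} := by
  classical
  set m : ℕ := ⌈2 * (n : ℝ) * Real.log (2 * n)⌉₊ with hm_def
  have hn1 : (1 : ℝ) ≤ n := by exact_mod_cast hn
  have hlog : 0 < Real.log (2 * n) := Real.log_pos (by linarith)
  have hm_ge : 2 * (n : ℝ) * Real.log (2 * n) ≤ m := Nat.le_ceil _
  -- blocks
  set B : ℕ → Finset ℕ := fun j => Finset.Icc (j * m + 1) ((j + 1) * m) with hB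
  have hBcard : ∀ j, (B j).card = m := by
    intro j
    simp only [hB, Nat.card_Icc]
    have : (j + 1) * m = j * m + m := by ring
    omega
  have hBdisj : ∀ j j', j ≠ j' → Disjoint (B j) (B j') := by
    intro j j' hjj'
    rw [Finset.disjoint_left]
    intro s hs hs'
    simp only [hB, Finset.mem_Icc] at hs hs'
    rcases lt_or_gt_of_ne hjj' with h | h
    · have : (j + 1) * m ≤ j' * m := Nat.mul_le_mul_right m (by omega)
      omega
    · have : (j' + 1) * m ≤ j * m := Nat.mul_le_mul_right m (by omega)
      omega
  have hBsub : ∀ j, j < 4 * T → B j ⊆ Finset.Icc 1 t := by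
    intro j hj s hs
    simp only [hB, Finset.mem_Icc] at hs
    have : (j + 1) * m ≤ 4 * T * m := Nat.mul_le_mul_right m (by omega)
    simp only [Finset.mem_Icc]
    omega
  -- basic events
  have hmeasA : ∀ (s : ℕ) (i : Fin n), MeasurableSet {ω | X s ω = i} := by
    intro s i
    exact hX_meas s (measurableSet_singleton i)
  have hPne : ∀ (s : ℕ) (i : Fin n), P {ω | X s ω ≠ i} = 1 - (n : ENNReal)⁻¹ := by
    intro s i
    have : {ω | X s ω ≠ i} = {ω | X s ω = i}ᶜ := rfl
    rw [this, measure_compl (hmeasA s i) (measure_ne_top P _), hunif s i, measure_univ]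
  have hInter : ∀ (i : Fin n) (F : Finset ℕ),
      P (⋂ s ∈ F, {ω | X s ω ≠ i}) = (1 - (n : ENNReal)⁻¹) ^ F.card := by
    intro i F
    rw [hindep.meas_biInter (S := F) (s := fun s => {ω | X s ω ≠ i})
      (fun s _ => ⟨{i}ᶜ, (measurableSet_singleton i).compl, rfl⟩)]
    rw [Finset.prod_congr rfl fun s _ => hPne s i, Finset.prod_const]
  -- the family of subsets of blocks
  set 𝒮 : Finset (Finset ℕ) := (Finset.range (4 * T)).powersetCard (3 * T + 1) with h𝒮
  -- inclusion: the bad event for i is covered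
  have hincl : ∀ i : Fin n,
      {ω | ¬ T ≤ ((Finset.Icc 1 t).filter (fun s => X s ω = i)).card} ⊆
        ⋃ S ∈ 𝒮, ⋂ s ∈ S.biUnion B, {ω | X s ω ≠ i} := by
    intro i ω hω
    simp only [Set.mem_setOf_eq, not_le] at hω
    set N : Finset ℕ :=
      (Finset.range (4 * T)).filter (fun j => ∃ s ∈ B j, X s ω = i) with hN
    have hNle : N.card ≤ ((Finset.Icc 1 t).filter (fun s => X s ω = i)).card := by
      apply Finset.card_le_card_of_injOn
        (fun j => if h : ∃ s ∈ B j, X s ω = i then h.choose else 0)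
      · intro j hj
        simp only [hN, Finset.mem_coe, Finset.mem_filter, Finset.mem_range] at hj
        obtain ⟨hj4, hex⟩ := hj
        simp only [dif_pos hex]
        obtain ⟨hs1, hs2⟩ := hex.choose_spec
        exact Finset.mem_filter.mpr ⟨hBsub j hj4 hs1, hs2⟩
      · intro j hj j' hj' hfe
        simp only [hN, Finset.coe_filter, Set.mem_setOf_eq, Finset.mem_range] at hj hj'
        by_contra hne
        have h1 : (hj.2.choose) ∈ B j := hj.2.choose_spec.1
        have h2 : (hj'.2.choose) ∈ B j' := hj'.2.choose_spec.1
        simp only [dif_pos hj.2, dif_pos hj'.2] at hfe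
        rw [hfe] at h1
        exact (Finset.disjoint_left.mp (hBdisj j j' hne)) (hfe ▸ hj.2.choose_spec.1) h2
    have hNcard : N.card < T := lt_of_le_of_lt hNle hω
    have hNsub : N ⊆ Finset.range (4 * T) := Finset.filter_subset _ _
    have hcard : 3 * T + 1 ≤ (Finset.range (4 * T) \ N).card := by
      rw [Finset.card_sdiff_of_subset hNsub, Finset.card_range]
      omega
    obtain ⟨S, hSsub, hScard⟩ := Finset.exists_subset_card_eq hcard
    have hSmem : S ∈ 𝒮 := by
      rw [h𝒮, Finset.mem_powersetCard]
      exact ⟨hSsub.trans (Finset.sdiff_subset), hScard⟩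
    refine Set.mem_biUnion hSmem ?_
    · simp only [Set.mem_iInter, Set.mem_setOf_eq]
      intro s hs
      rw [Finset.mem_biUnion] at hs
      obtain ⟨j, hjS, hsB⟩ := hs
      have hjmem := hSsub hjS
      rw [Finset.mem_sdiff] at hjmem
      intro hXsi
      exact hjmem.2 (Finset.mem_filter.mpr ⟨hjmem.1, ⟨s, hsB, hXsi⟩⟩)
  -- measure of each covering piece
  have hpiece : ∀ (i : Fin n), ∀ S ∈ 𝒮,
      P (⋂ s ∈ S.biUnion B, {ω | X s ω ≠ i}) =
        (1 - (n : ENNReal)⁻¹) ^ ((3 * T + 1) * m) := by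
    intro i S hS
    rw [hInter i, Finset.card_biUnion (fun j _ j' _ h => hBdisj j j' h)]
    rw [h𝒮, Finset.mem_powersetCard] at hS
    rw [Finset.sum_congr rfl (fun j _ => hBcard j), Finset.sum_const, hS.2, smul_eq_mul]
  set q : ENNReal := (1 - (n : ENNReal)⁻¹) ^ ((3 * T + 1) * m) with hq
  -- per-value bad probability
  have hbad : ∀ i : Fin n,
      P {ω | ¬ T ≤ ((Finset.Icc 1 t).filter (fun s => X s ω = i)).card} ≤
        (𝒮.card : ENNReal) * q := by
    intro i
    calc P {ω | ¬ T ≤ ((Finset.Icc 1 t).filter (fun s => X s ω = i)).card}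
        ≤ P (⋃ S ∈ 𝒮, ⋂ s ∈ S.biUnion B, {ω | X s ω ≠ i}) := measure_mono (hincl i)
      _ ≤ ∑ S ∈ 𝒮, P (⋂ s ∈ S.biUnion B, {ω | X s ω ≠ i}) := measure_biUnion_finset_le _ _
      _ = ∑ _S ∈ 𝒮, q := Finset.sum_congr rfl (hpiece i)
      _ = (𝒮.card : ENNReal) * q := by rw [Finset.sum_const, nsmul_eq_mul]
  -- measurability of the good event
  have hfmeas : ∀ i : Fin n,
      Measurable fun ω => ((Finset.Icc 1 t).filter (fun s => X s ω = i)).card := by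
    intro i
    have hrw : (fun ω => ((Finset.Icc 1 t).filter (fun s => X s ω = i)).card) =
        fun ω => ∑ s ∈ Finset.Icc 1 t, if X s ω = i then 1 else 0 := by
      funext ω; rw [Finset.card_filter]
    rw [hrw]
    exact Finset.measurable_sum _ fun s _ =>
      Measurable.ite (hmeasA s i) measurable_const measurable_const
  have hGmeas : MeasurableSet
      {ω | ∀ i : Fin n, T ≤ ((Finset.Icc 1 t).filter (fun s => X s ω = i)).card} := by
    have hrw : {ω | ∀ i : Fin n, T ≤ ((Finset.Icc 1 t).filter (fun s => X s ω = i)).card} =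
        ⋂ i : Fin n, (fun ω => ((Finset.Icc 1 t).filter (fun s => X s ω = i)).card) ⁻¹'
          Set.Ici T := by
      ext ω; simp [Set.mem_iInter]
    rw [hrw]
    exact MeasurableSet.iInter fun i => (hfmeas i) measurableSet_Ici
  -- the numeric bound
  have hn0 : (0:ℝ) < n := by linarith
  have hr0 : (0:ℝ) ≤ 1 - 1 / n := by
    rw [sub_nonneg, div_le_one hn0]; exact hn1
  have hqconv : q = ENNReal.ofReal ((1 - 1 / (n:ℝ)) ^ ((3 * T + 1) * m)) := by
    rw [ENNReal.ofReal_pow hr0, hq]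
    congr 1
    rw [ENNReal.ofReal_sub _ (by positivity), ENNReal.ofReal_one, one_div,
      ENNReal.ofReal_inv_of_pos hn0, ENNReal.ofReal_natCast]
  have hcard𝒮 : 𝒮.card = (4 * T).choose (3 * T + 1) := by
    rw [h𝒮, Finset.card_powersetCard, Finset.card_range]
  -- real inequality
  have hreal : (n:ℝ) * (𝒮.card : ℝ) * (1 - 1 / (n:ℝ)) ^ ((3 * T + 1) * m) ≤
      Real.exp (-(T : ℝ) / 4) := by
    set K : ℕ := (3 * T + 1) * m with hK
    have h2 : (1 - 1 / (n:ℝ)) ^ K ≤ Real.exp (-(K:ℝ) / n) := by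
      calc (1 - 1 / (n:ℝ)) ^ K ≤ Real.exp (-(1 / (n:ℝ))) ^ K := by
            apply pow_le_pow_left₀ hr0
            nlinarith [Real.add_one_le_exp (-(1 / (n:ℝ)))]
        _ = Real.exp (-(K:ℝ) / n) := by
            rw [← Real.exp_nat_mul]; congr 1; field_simp
    have h3 : Real.exp (-(K:ℝ) / n) ≤
        Real.exp (-(((6 * T + 2 : ℕ) : ℝ) * Real.log (2 * n))) := by
      apply Real.exp_le_exp.mpr
      rw [neg_div, neg_le_neg_iff, le_div_iff₀ hn0]
      have hKval : (K:ℝ) = ((3 * T + 1 : ℕ) : ℝ) * m := by push_cast [hK]; ring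
      have h31 : (1:ℝ) ≤ ((3 * T + 1 : ℕ) : ℝ) := by
        have : (1:ℕ) ≤ 3 * T + 1 := by omega
        exact_mod_cast this
      rw [hKval]
      have : ((6 * T + 2 : ℕ):ℝ) = 2 * ((3 * T + 1 : ℕ):ℝ) := by push_cast; ring
      rw [this]
      calc 2 * ((3 * T + 1 : ℕ):ℝ) * Real.log (2 * n) * n
          = ((3 * T + 1 : ℕ):ℝ) * (2 * n * Real.log (2 * n)) := by ring
        _ ≤ ((3 * T + 1 : ℕ):ℝ) * m := by
            apply mul_le_mul_of_nonneg_left hm_ge (by linarith)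
    have h4 : Real.exp (-(((6 * T + 2 : ℕ) : ℝ) * Real.log (2 * n))) =
        ((2 * (n:ℝ)) ^ (6 * T + 2))⁻¹ := by
      rw [Real.exp_neg, Real.exp_nat_mul, Real.exp_log (by positivity)]
    have hc : (𝒮.card : ℝ) ≤ 2 ^ (4 * T) := by
      rw [hcard𝒮]
      exact_mod_cast choose_le_two_pow_aux (4 * T) (3 * T + 1)
    have hstep : (n:ℝ) * (𝒮.card : ℝ) * (1 - 1 / (n:ℝ)) ^ K ≤
        (n:ℝ) * 2 ^ (4 * T) * ((2 * (n:ℝ)) ^ (6 * T + 2))⁻¹ := by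
      have hc0 : (0:ℝ) ≤ (𝒮.card : ℝ) := Nat.cast_nonneg _
      have := h2.trans (h3.trans_eq h4)
      have hp0 : (0:ℝ) ≤ (1 - 1 / (n:ℝ)) ^ K := pow_nonneg hr0 K
      nlinarith [pow_nonneg hr0 K, Real.exp_nonneg (-(K:ℝ)/n),
        inv_nonneg.mpr (pow_nonneg (by positivity : (0:ℝ) ≤ 2 * n) (6 * T + 2)),
        mul_le_mul_of_nonneg_left this (mul_nonneg (le_of_lt hn0) hc0),
        mul_le_mul_of_nonneg_right hc
          (mul_nonneg (le_of_lt hn0)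
            (inv_nonneg.mpr (pow_nonneg (by positivity : (0:ℝ) ≤ 2 * n) (6 * T + 2))))]
    refine hstep.trans ?_
    -- final: n * 2^(4T) / (2n)^(6T+2) ≤ exp(-T/4)
    have hpospow : (0:ℝ) < (2 * (n:ℝ)) ^ (6 * T + 2) := by positivity
    rw [mul_inv_le_iff₀' hpospow]
    have hexpT : Real.exp (-(T:ℝ) / 4) = Real.exp (-(1/4 : ℝ)) ^ T := by
      rw [← Real.exp_nat_mul]; congr 1; ring
    have h14 : (4:ℝ)⁻¹ ≤ Real.exp (-(1/4:ℝ)) := by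
      nlinarith [Real.add_one_le_exp (-(1/4:ℝ))]
    have hq4 : (4:ℝ)⁻¹ ^ T ≤ Real.exp (-(1/4:ℝ)) ^ T :=
      pow_le_pow_left₀ (by norm_num) h14 T
    have hmulpow : (2 * (n:ℝ)) ^ (6 * T + 2) = 2 ^ (6 * T + 2) * (n:ℝ) ^ (6 * T + 2) :=
      mul_pow 2 _ _
    have hnpow : (n:ℝ) ≤ (n:ℝ) ^ (6 * T + 2) := le_self_pow₀ hn1 (by omega)
    have hkey : (4:ℝ)⁻¹ ^ T * 2 ^ (6 * T + 2) = 2 ^ (4 * T + 2) := by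
      have h4T : (4:ℝ) ^ T = 2 ^ (2 * T) := by
        rw [show (4:ℝ) = 2 ^ 2 by norm_num, ← pow_mul]
      have : (2:ℝ) ^ (6 * T + 2) = 4 ^ T * 2 ^ (4 * T + 2) := by
        rw [h4T, ← pow_add]; congr 1; ring
      rw [this, inv_pow, ← mul_assoc, inv_mul_cancel₀ (by positivity), one_mul]
    calc (n:ℝ) * 2 ^ (4 * T)
        ≤ 2 ^ (4 * T + 2) * (n:ℝ) := by
          rw [pow_add]; nlinarith [pow_pos (show (0:ℝ) < 2 by norm_num) (4 * T)]
      _ = (4:ℝ)⁻¹ ^ T * (2 ^ (6 * T + 2) * (n:ℝ)) := by rw [← mul_assoc, hkey]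
      _ ≤ Real.exp (-(1/4:ℝ)) ^ T * (2 ^ (6 * T + 2) * (n:ℝ) ^ (6 * T + 2)) := by
          apply mul_le_mul hq4 (by nlinarith [pow_pos (show (0:ℝ) < 2 by norm_num) (6 * T + 2)])
            (by positivity) (by positivity)
      _ = Real.exp (-(T:ℝ) / 4) * (2 * (n:ℝ)) ^ (6 * T + 2) := by
          rw [hexpT, hmulpow]
      _ = (2 * (n:ℝ)) ^ (6 * T + 2) * Real.exp (-(T:ℝ) / 4) := mul_comm _ _
  -- bound the complement
  have hcompl : P {ω | ∀ i : Fin n, T ≤ ((Finset.Icc 1 t).filter (fun s => X s ω = i)).card}ᶜ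
      ≤ ENNReal.ofReal (Real.exp (-(T:ℝ) / 4)) := by
    have hcrw : {ω | ∀ i : Fin n, T ≤ ((Finset.Icc 1 t).filter (fun s => X s ω = i)).card}ᶜ =
        ⋃ i : Fin n, {ω | ¬ T ≤ ((Finset.Icc 1 t).filter (fun s => X s ω = i)).card} := by
      ext ω; simp [not_forall]
    rw [hcrw]
    calc P (⋃ i : Fin n, {ω | ¬ T ≤ ((Finset.Icc 1 t).filter (fun s => X s ω = i)).card})
        ≤ ∑ i : Fin n, P {ω | ¬ T ≤ ((Finset.Icc 1 t).filter (fun s => X s ω = i)).card} :=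
          measure_iUnion_fintype_le _ _
      _ ≤ ∑ _i : Fin n, (𝒮.card : ENNReal) * q := Finset.sum_le_sum fun i _ => hbad i
      _ = (n : ENNReal) * ((𝒮.card : ENNReal) * q) := by
          rw [Finset.sum_const, Finset.card_univ, Fintype.card_fin, nsmul_eq_mul]
      _ ≤ ENNReal.ofReal (Real.exp (-(T:ℝ) / 4)) := by
          rw [hqconv, ← ENNReal.ofReal_natCast 𝒮.card, ← ENNReal.ofReal_natCast n,
            ← ENNReal.ofReal_mul (Nat.cast_nonneg _), ← ENNReal.ofReal_mul (Nat.cast_nonneg _)]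
          exact ENNReal.ofReal_le_ofReal (by rw [← mul_assoc]; exact hreal)
  -- conclude
  have hG1 : P {ω | ∀ i : Fin n, T ≤ ((Finset.Icc 1 t).filter (fun s => X s ω = i)).card} =
      1 - P {ω | ∀ i : Fin n, T ≤ ((Finset.Icc 1 t).filter (fun s => X s ω = i)).card}ᶜ := by
    rw [prob_compl_eq_one_sub hGmeas,
      ENNReal.sub_sub_cancel ENNReal.one_ne_top prob_le_one]
  rw [hG1, ENNReal.ofReal_sub _ (Real.exp_nonneg _), ENNReal.ofReal_one]
  exact tsub_le_tsub_left hcompl 1
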